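/- In the ring ℚ[[x]] of formal power series over the rationals, the power series F(x) = ∑_{i≥1} (-1)^{i-1} · 2((i-1)!)²/(2i)! · x^i is the compositional inverse of the power series H(x) = ∑_{j≥1} 2/(2j)! · x^j; that is, F(H(x)) = x and H(F(x)) = x. -/

import Mathlib

open PowerSeries

/-- Composition `F(H(x))` of formal power series, valid when `H` has zero constant
coefficient: the `n`-th coefficient is computed from truncations of degree `n`. -/
noncomputable def PowerSeries.compose (F H : PowerSeries ℚ) : PowerSeries ℚ :=
  PowerSeries.mk fun n =>
    Polynomial.coeff ((PowerSeries.trunc (n + 1) F).comp (PowerSeries.trunc (n + 1) H)) n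

namespace PowerSeries

open Finset

lemma coeff_trunc_pow_eq (H : ℚ⟦X⟧) (n k : ℕ) :
    Polynomial.coeff ((trunc (n+1) H)^k) n = coeff n (H^k) := by
  have hdvd : (X : ℚ⟦X⟧)^(n+1) ∣ ((trunc (n+1) H : Polynomial ℚ) : ℚ⟦X⟧) - H := by
    rw [X_pow_dvd_iff]
    intro m hm
    rw [map_sub, Polynomial.coeff_coe, coeff_trunc, if_pos hm, sub_self]
  have h2 : (X : ℚ⟦X⟧)^(n+1) ∣ ((trunc (n+1) H : Polynomial ℚ) : ℚ⟦X⟧)^k - H^k :=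
    dvd_trans hdvd (sub_dvd_pow_sub_pow _ _ k)
  have h3 := (X_pow_dvd_iff.mp h2) n (Nat.lt_succ_self n)
  rw [map_sub, sub_eq_zero] at h3
  rw [← h3, ← Polynomial.coe_pow, Polynomial.coeff_coe]

lemma coeff_compose (F H : ℚ⟦X⟧) (n : ℕ) :
    coeff n (F.compose H) = ∑ k ∈ range (n+1), coeff k F * coeff n (H^k) := by
  rw [PowerSeries.compose, coeff_mk, Polynomial.comp,
      Polynomial.eval₂_eq_sum_range' _ (natDegree_trunc_lt F n) _,
      Polynomial.finset_sum_coeff]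
  refine Finset.sum_congr rfl fun k hk => ?_
  rw [Polynomial.coeff_C_mul, coeff_trunc, if_pos (mem_range.mp hk), coeff_trunc_pow_eq]

lemma coeff_pow_eq_zero' {H : ℚ⟦X⟧} (hH : constantCoeff H = 0) {n k : ℕ} (h : n < k) :
    coeff n (H ^ k) = 0 :=
  X_pow_dvd_iff.mp (pow_dvd_pow_of_dvd (X_dvd_iff.mpr hH) k) n h

lemma coeff_compose' {H : ℚ⟦X⟧} (hH : constantCoeff H = 0) (F : ℚ⟦X⟧) {n N : ℕ}
    (hn : n < N) :
    coeff n (F.compose H) = ∑ k ∈ range N, coeff k F * coeff n (H^k) := by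
  rw [coeff_compose]
  refine Finset.sum_subset (fun x hx => by simp only [mem_range] at *; omega) ?_
  intro k hk hk'
  have : n < k := by simp only [mem_range] at hk hk'; omega
  rw [coeff_pow_eq_zero' hH this, mul_zero]

lemma coeff_compose_congr {F₁ F₂ H : ℚ⟦X⟧} {n : ℕ}
    (h : ∀ i ≤ n, coeff i F₁ = coeff i F₂) :
    coeff n (F₁.compose H) = coeff n (F₂.compose H) := by
  rw [coeff_compose, coeff_compose]
  exact Finset.sum_congr rfl fun k hk => by
    rw [h k (Nat.lt_succ_iff.mp (mem_range.mp hk))]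

lemma compose_add (F G H : ℚ⟦X⟧) : (F+G).compose H = F.compose H + G.compose H := by
  ext n
  rw [map_add, coeff_compose, coeff_compose, coeff_compose, ← Finset.sum_add_distrib]
  exact Finset.sum_congr rfl fun k _ => by rw [map_add, add_mul]

lemma compose_C_mul_X_pow {H : ℚ⟦X⟧} (hH : constantCoeff H = 0) (c : ℚ) (k : ℕ) :
    ((C c) * X^k).compose H = (C c) * H^k := by
  ext n
  have hn : n < max n k + 1 := Nat.lt_succ_of_le (le_max_left n k)
  rw [coeff_compose' hH _ hn, coeff_C_mul, Finset.sum_eq_single k]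
  · rw [coeff_C_mul, coeff_X_pow, if_pos rfl, mul_one]
  · intro j _ hj
    rw [coeff_C_mul, coeff_X_pow, if_neg hj, mul_zero, zero_mul]
  · intro hk
    exact absurd (mem_range.mpr (Nat.lt_succ_of_le (le_max_right n k))) hk

lemma compose_C {H : ℚ⟦X⟧} (hH : constantCoeff H = 0) (c : ℚ) :
    (C c).compose H = C c := by
  have := compose_C_mul_X_pow hH c 0
  simpa using this

lemma compose_one {H : ℚ⟦X⟧} (hH : constantCoeff H = 0) : (1 : ℚ⟦X⟧).compose H = 1 := by
  rw [← map_one C, compose_C hH]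

lemma compose_X {H : ℚ⟦X⟧} (hH : constantCoeff H = 0) : (X : ℚ⟦X⟧).compose H = H := by
  have := compose_C_mul_X_pow hH 1 1
  simpa using this

lemma compose_coe {H : ℚ⟦X⟧} (hH : constantCoeff H = 0) (P : Polynomial ℚ) :
    (↑P : ℚ⟦X⟧).compose H = Polynomial.aeval H P := by
  induction P using Polynomial.induction_on' with
  | add p q hp hq => rw [Polynomial.coe_add, compose_add, hp, hq, map_add]
  | monomial k c =>
      have hm : ((Polynomial.monomial k c : Polynomial ℚ) : ℚ⟦X⟧) = (C c) * X^k := by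
        rw [Polynomial.coe_monomial, X_pow_eq]
        ext m
        simp [coeff_monomial, coeff_C_mul, mul_comm]
      rw [hm, compose_C_mul_X_pow hH, Polynomial.aeval_monomial]
      congr 1

lemma compose_mul {H : ℚ⟦X⟧} (hH : constantCoeff H = 0) (F G : ℚ⟦X⟧) :
    (F*G).compose H = F.compose H * G.compose H := by
  ext n
  set P := trunc (n+1) F with hPdef
  set Q := trunc (n+1) G with hQdef
  have hP : ∀ i ≤ n, coeff i (↑P : ℚ⟦X⟧) = coeff i F := fun i hi => by
    rw [Polynomial.coeff_coe, coeff_trunc, if_pos (Nat.lt_succ_of_le hi)]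
  have hQ : ∀ i ≤ n, coeff i (↑Q : ℚ⟦X⟧) = coeff i G := fun i hi => by
    rw [Polynomial.coeff_coe, coeff_trunc, if_pos (Nat.lt_succ_of_le hi)]
  have h1 : coeff n ((F*G).compose H) = coeff n ((↑(P*Q) : ℚ⟦X⟧).compose H) := by
    apply coeff_compose_congr
    intro i hi
    rw [Polynomial.coe_mul, coeff_mul, coeff_mul]
    refine Finset.sum_congr rfl fun p hp => ?_
    have hmem := Finset.HasAntidiagonal.mem_antidiagonal.mp hp
    rw [hP p.1 (le_trans (by omega) hi), hQ p.2 (le_trans (by omega) hi)]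
  have h2 : (↑(P*Q) : ℚ⟦X⟧).compose H = (↑P : ℚ⟦X⟧).compose H * (↑Q : ℚ⟦X⟧).compose H := by
    rw [compose_coe hH, map_mul, ← compose_coe hH, ← compose_coe hH]
  rw [h1, h2, coeff_mul, coeff_mul]
  refine Finset.sum_congr rfl fun p hp => ?_
  have hmem := Finset.HasAntidiagonal.mem_antidiagonal.mp hp
  rw [coeff_compose_congr (fun i hi => hP i (le_trans hi (by omega))),
      coeff_compose_congr (fun i hi => hQ i (le_trans hi (by omega)))]


lemma compose_pow {H : ℚ⟦X⟧} (hH : constantCoeff H = 0) (G : ℚ⟦X⟧) (k : ℕ) :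
    (G^k).compose H = (G.compose H)^k := by
  induction k with
  | zero => simpa using compose_one hH
  | succ k ih => rw [pow_succ, pow_succ, compose_mul hH, ih]

lemma constantCoeff_compose (F H : ℚ⟦X⟧) :
    constantCoeff (F.compose H) = constantCoeff F := by
  rw [← coeff_zero_eq_constantCoeff_apply, ← coeff_zero_eq_constantCoeff_apply, coeff_compose]
  simp

lemma compose_assoc {G H : ℚ⟦X⟧} (hG : constantCoeff G = 0) (hH : constantCoeff H = 0)
    (F : ℚ⟦X⟧) : (F.compose G).compose H = F.compose (G.compose H) := by
  have hGH : constantCoeff (G.compose H) = 0 := by rw [constantCoeff_compose, hG]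
  ext n
  rw [coeff_compose' hH _ (Nat.lt_succ_self n), coeff_compose' hGH _ (Nat.lt_succ_self n)]
  have step : ∀ j ∈ range (n+1), coeff j (F.compose G) * coeff n (H^j)
      = ∑ k ∈ range (n+1), coeff k F * (coeff j (G^k) * coeff n (H^j)) := by
    intro j hj
    rw [coeff_compose' hG _ (mem_range.mp hj), Finset.sum_mul]
    exact Finset.sum_congr rfl fun k _ => by ring
  rw [Finset.sum_congr rfl step, Finset.sum_comm]
  refine Finset.sum_congr rfl fun k _ => ?_
  rw [← Finset.mul_sum, ← compose_pow hH, coeff_compose' hH _ (Nat.lt_succ_self n)]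

lemma compose_X_right (F : ℚ⟦X⟧) : F.compose X = F := by
  ext n
  rw [coeff_compose' (by simp : constantCoeff (X : ℚ⟦X⟧) = 0) _ (Nat.lt_succ_self n),
    Finset.sum_eq_single n]
  · rw [coeff_X_pow, if_pos rfl, mul_one]
  · intro j _ hj
    rw [coeff_X_pow, if_neg (fun h => hj h.symm), mul_zero]
  · intro h; exact absurd (mem_range.mpr (Nat.lt_succ_self n)) h

open Derivation in
lemma derivative_compose {H : ℚ⟦X⟧} (hH : constantCoeff H = 0) (F : ℚ⟦X⟧) :
    d⁄dX ℚ (F.compose H) = ((d⁄dX ℚ F).compose H) * d⁄dX ℚ H := by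
  ext n
  have hlhs : coeff n (d⁄dX ℚ (F.compose H))
      = ∑ k ∈ range (n+2), coeff k F * (coeff (n+1) (H^k) * (n+1)) := by
    rw [coeff_derivative, coeff_compose' hH _ (Nat.lt_succ_self (n+1)), Finset.sum_mul]
    exact Finset.sum_congr rfl fun k _ => by ring
  have hd : ∀ k : ℕ, coeff (n+1) (H^k) * (n+1) = coeff n (d⁄dX ℚ (H^k)) := by
    intro k; rw [coeff_derivative]
  have hpow : ∀ k : ℕ, d⁄dX ℚ (H^(k+1)) = (k+1 : ℚ⟦X⟧) * (H^k * d⁄dX ℚ H) := by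
    intro k
    rw [Derivation.leibniz_pow]
    simp only [nsmul_eq_mul, smul_eq_mul, Nat.add_sub_cancel]
    push_cast
    ring
  have hrhs : coeff n (((d⁄dX ℚ F).compose H) * d⁄dX ℚ H)
      = ∑ k ∈ range (n+1), coeff (k+1) F * (k+1) * coeff n (H^k * d⁄dX ℚ H) := by
    rw [coeff_mul]
    have h1 : ∀ p ∈ Finset.HasAntidiagonal.antidiagonal n,
        coeff p.1 ((d⁄dX ℚ F).compose H) * coeff p.2 (d⁄dX ℚ H)
        = ∑ k ∈ range (n+1), coeff (k+1) F * (k+1)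
            * (coeff p.1 (H^k) * coeff p.2 (d⁄dX ℚ H)) := by
      intro p hp
      have hpn : p.1 < n + 1 :=
        Nat.lt_succ_of_le (le_of_le_of_eq (Nat.le_add_right _ _) (Finset.HasAntidiagonal.mem_antidiagonal.mp hp))
      rw [coeff_compose' hH _ hpn, Finset.sum_mul]
      refine Finset.sum_congr rfl fun k _ => ?_
      rw [coeff_derivative]
      ring
    rw [Finset.sum_congr rfl h1, Finset.sum_comm]
    refine Finset.sum_congr rfl fun k _ => ?_
    rw [coeff_mul, ← Finset.mul_sum]
  rw [hlhs, hrhs, Finset.sum_congr rfl (fun k _ => by rw [hd k]), Finset.sum_range_succ']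
  have h0 : coeff 0 F * coeff n (d⁄dX ℚ (H^0)) = 0 := by
    simp [Derivation.map_one_eq_zero]
  rw [h0, add_zero]
  refine Finset.sum_congr rfl fun k _ => ?_
  rw [hpow k]
  have hcast : ((k : ℚ⟦X⟧) + 1) = C ((k : ℚ) + 1) := by
    rw [map_add, _root_.map_natCast, map_one]
  rw [hcast, coeff_C_mul]
  ring

lemma coeff_self_pow_self {H : ℚ⟦X⟧} (hH : constantCoeff H = 0) (m : ℕ) :
    coeff m (H^m) = (coeff 1 H)^m := by
  induction m with
  | zero => simp
  | succ m ih =>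
    rw [pow_succ, coeff_mul, Finset.sum_eq_single (m, 1)]
    · rw [ih, pow_succ]
    · intro p hp hne
      have hsum := Finset.HasAntidiagonal.mem_antidiagonal.mp hp
      rcases lt_trichotomy p.1 m with h | h | h
      · rw [coeff_pow_eq_zero' hH h, zero_mul]
      · exact absurd (Prod.ext h (by omega)) hne
      · have : p.2 = 0 := by omega
        rw [this, coeff_zero_eq_constantCoeff_apply, hH, mul_zero]
    · intro h
      exact absurd (Finset.HasAntidiagonal.mem_antidiagonal.mpr (by omega)) h

lemma compose_right_injective {H : ℚ⟦X⟧} (hH : constantCoeff H = 0)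
    (h1 : coeff 1 H ≠ 0) {A B : ℚ⟦X⟧} (hcomp : A.compose H = B.compose H) : A = B := by
  ext m
  induction m using Nat.strong_induction_on with
  | _ m ih =>
    have hc : coeff m (A.compose H) = coeff m (B.compose H) := by rw [hcomp]
    rw [coeff_compose, coeff_compose, Finset.sum_range_succ, Finset.sum_range_succ] at hc
    have heq : ∀ k ∈ range m, coeff k A * coeff m (H^k) = coeff k B * coeff m (H^k) :=
      fun k hk => by rw [ih k (mem_range.mp hk)]
    rw [Finset.sum_congr rfl heq, add_right_inj] at hc
    have hpow : coeff m (H^m) ≠ 0 := by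
      rw [coeff_self_pow_self hH]; exact pow_ne_zero _ h1
    exact mul_right_cancel₀ hpow hc

lemma compose_X_sq_injective {A B : ℚ⟦X⟧}
    (hcomp : A.compose (X^2) = B.compose (X^2)) : A = B := by
  have hX2 : constantCoeff ((X : ℚ⟦X⟧)^2) = 0 := by simp
  ext m
  have hc : coeff (2*m) (A.compose (X^2)) = coeff (2*m) (B.compose (X^2)) := by rw [hcomp]
  have key : ∀ P : ℚ⟦X⟧, coeff (2*m) (P.compose (X^2)) = coeff m P := by
    intro P
    rw [coeff_compose' hX2 _ (by omega : 2*m < 2*m+1), Finset.sum_eq_single m]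
    · rw [← pow_mul, coeff_X_pow, if_pos rfl, mul_one]
    · intro j _ hj
      rw [← pow_mul, coeff_X_pow, if_neg (by omega), mul_zero]
    · intro h; exact absurd (mem_range.mpr (by omega)) h
  rw [key, key] at hc
  exact hc


noncomputable def Eser (a : ℚ) : ℚ⟦X⟧ := rescale a (exp ℚ)

lemma coeff_Eser (a : ℚ) (n : ℕ) : coeff n (Eser a) = a^n / (n.factorial : ℚ) := by
  rw [Eser, coeff_rescale, coeff_exp]
  simp [div_eq_mul_inv]

lemma Eser_mul (a b : ℚ) : Eser a * Eser b = Eser (a+b) := exp_mul_exp_eq_exp_add a b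

lemma Eser_zero : Eser 0 = 1 := by
  rw [Eser, rescale_zero]
  simp

lemma derivative_Eser (a : ℚ) : d⁄dX ℚ (Eser a) = C a * Eser a := by
  ext n
  rw [coeff_derivative, coeff_C_mul, coeff_Eser, coeff_Eser, Nat.factorial_succ]
  have h1 : ((n.factorial : ℚ)) ≠ 0 := Nat.cast_ne_zero.mpr (Nat.factorial_ne_zero n)
  have h2 : ((n:ℚ) + 1) ≠ 0 := by positivity
  push_cast
  field_simp
  ring

noncomputable def Sser : ℚ⟦X⟧ := Eser (1/2) - Eser (-1/2)
noncomputable def Cser : ℚ⟦X⟧ := Eser (1/2) + Eser (-1/2)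

lemma constantCoeff_Sser : constantCoeff Sser = 0 := by
  rw [← coeff_zero_eq_constantCoeff_apply, Sser, map_sub, coeff_Eser, coeff_Eser]
  norm_num

lemma coeff_one_Sser : coeff 1 Sser = 1 := by
  rw [Sser, map_sub, coeff_Eser, coeff_Eser]
  norm_num

lemma derivative_Sser : d⁄dX ℚ Sser = C (1/2) * Cser := by
  have hneg : ((-1:ℚ)/2) = -(1/2) := by norm_num
  rw [Sser, map_sub, derivative_Eser, derivative_Eser, Cser]
  have : (C ((-1:ℚ)/2) : ℚ⟦X⟧) = - C (1/2) := by rw [hneg, map_neg]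
  rw [this]
  ring

lemma derivative_Cser : d⁄dX ℚ Cser = C (1/2) * Sser := by
  have hneg : ((-1:ℚ)/2) = -(1/2) := by norm_num
  rw [Cser, map_add, derivative_Eser, derivative_Eser, Sser]
  have : (C ((-1:ℚ)/2) : ℚ⟦X⟧) = - C (1/2) := by rw [hneg, map_neg]
  rw [this]
  ring

lemma Eser_half_mul : Eser (1/2) * Eser (-1/2) = 1 := by
  rw [Eser_mul]
  norm_num [Eser_zero]

lemma Sser_sq : Sser * Sser = Eser 1 + Eser (-1) - 2 := by
  have h1 : Eser (1/2) * Eser (1/2) = Eser 1 := by rw [Eser_mul]; norm_num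
  have h3 : Eser (-1/2) * Eser (-1/2) = Eser (-1) := by rw [Eser_mul]; norm_num
  rw [Sser]
  linear_combination h1 - 2 * Eser_half_mul + h3

lemma Cser_sq : Cser * Cser = Sser * Sser + 4 := by
  rw [Cser, Sser]
  linear_combination 4 * Eser_half_mul

lemma coeff_compose_X2 (P : ℚ⟦X⟧) (n : ℕ) :
    coeff n (P.compose (X^2)) = if n % 2 = 0 then coeff (n/2) P else 0 := by
  have hX2 : constantCoeff ((X:ℚ⟦X⟧)^2) = 0 := by simp
  rw [coeff_compose' hX2 _ (Nat.lt_succ_self n)]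
  have hterm : ∀ k ∈ range (n+1), coeff k P * coeff n ((X^2)^k)
      = if n = 2*k then coeff k P else 0 := by
    intro k _
    rw [← pow_mul, coeff_X_pow]
    split_ifs with h
    · rw [mul_one]
    · rw [mul_zero]
  rw [Finset.sum_congr rfl hterm]
  by_cases hpar : n % 2 = 0
  · rw [if_pos hpar, Finset.sum_eq_single (n/2)]
    · rw [if_pos (by omega)]
    · intro j _ hj
      rw [if_neg (by omega)]
    · intro h; exact absurd (mem_range.mpr (by omega)) h
  · rw [if_neg hpar]
    exact Finset.sum_eq_zero fun k _ => by rw [if_neg (by omega)]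


end PowerSeries

/-- `F(x) = ∑_{i≥1} (-1)^{i-1} · 2((i-1)!)²/(2i)! · xⁱ`. -/
noncomputable def Fseries : PowerSeries ℚ :=
  PowerSeries.mk fun i =>
    if i = 0 then 0
    else (-1 : ℚ) ^ (i - 1) * (2 * ((i - 1).factorial : ℚ) ^ 2 / ((2 * i).factorial : ℚ))

/-- `H(x) = ∑_{j≥1} 2/(2j)! · xʲ`. -/
noncomputable def Hseries : PowerSeries ℚ :=
  PowerSeries.mk fun j => if j = 0 then 0 else 2 / ((2 * j).factorial : ℚ)

namespace PowerSeries

lemma coeff_Fseries (n : ℕ) : coeff n Fseries =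
    if n = 0 then 0
    else (-1 : ℚ) ^ (n - 1) * (2 * ((n - 1).factorial : ℚ) ^ 2 / ((2 * n).factorial : ℚ)) := by
  rw [Fseries, coeff_mk]

lemma coeff_Hseries (n : ℕ) : coeff n Hseries =
    if n = 0 then 0 else 2 / ((2 * n).factorial : ℚ) := by
  rw [Hseries, coeff_mk]

lemma constantCoeff_Fseries : constantCoeff Fseries = 0 := by
  rw [← coeff_zero_eq_constantCoeff_apply, coeff_Fseries]; simp

lemma constantCoeff_Hseries : constantCoeff Hseries = 0 := by
  rw [← coeff_zero_eq_constantCoeff_apply, coeff_Hseries]; simp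

lemma coeff_one_Hseries : coeff 1 Hseries = 1 := by
  rw [coeff_Hseries]
  norm_num [Nat.factorial]

noncomputable def Gser : ℚ⟦X⟧ := Fseries.compose (X^2)

lemma hG_even (m : ℕ) : coeff (2*m) Gser = coeff m Fseries := by
  rw [Gser, coeff_compose_X2, if_pos (by omega), (by omega : 2*m/2 = m)]

lemma hG_odd (m : ℕ) (h : m % 2 = 1) : coeff m Gser = 0 := by
  rw [Gser, coeff_compose_X2, if_neg (by omega)]

lemma ODE_G : (X^2) * (d⁄dX ℚ (d⁄dX ℚ Gser)) + 4 * (d⁄dX ℚ (d⁄dX ℚ Gser))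
    + X^1 * (d⁄dX ℚ Gser) = C 8 := by
  have h4C : (4:ℚ⟦X⟧) = C 4 := (map_ofNat C 4).symm
  have hdG : ∀ m:ℕ, coeff m (d⁄dX ℚ Gser) = coeff (m+1) Gser * ((m:ℚ)+1) := by
    intro m; rw [coeff_derivative]
  have hddG : ∀ m:ℕ, coeff m (d⁄dX ℚ (d⁄dX ℚ Gser))
      = coeff (m+2) Gser * (((m:ℚ)+2)*((m:ℚ)+1)) := by
    intro m; rw [coeff_derivative, coeff_derivative]; push_cast; ring
  ext n
  rw [map_add, map_add, coeff_X_pow_mul', coeff_X_pow_mul', h4C, coeff_C_mul, coeff_C]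
  rcases Nat.even_or_odd n with he | ho
  · obtain ⟨m', hm'⟩ := he
    obtain ⟨m, rfl⟩ : ∃ m, n = 2*m := ⟨m', by omega⟩
    rcases m with _ | i
    · rw [if_neg (by omega : ¬ 2 ≤ 2*0), if_neg (by omega : ¬ 1 ≤ 2*0),
        if_pos (by omega : 2*0 = 0)]
      simp only [hddG]
      rw [(by omega : 2*0+2 = 2*1), hG_even, coeff_Fseries, if_neg one_ne_zero]
      norm_num [Nat.factorial]
    · rw [if_pos (by omega : 2 ≤ 2*(i+1)), if_pos (by omega : 1 ≤ 2*(i+1)),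
        if_neg (by omega : ¬ 2*(i+1) = 0),
        (by omega : 2*(i+1)-2 = 2*i), (by omega : 2*(i+1)-1 = 2*i+1)]
      simp only [hddG, hdG]
      rw [(by omega : 2*i+2 = 2*(i+1)), (by omega : 2*(i+1)+2 = 2*(i+2)),
        hG_even, hG_even, coeff_Fseries, coeff_Fseries,
        if_neg (Nat.succ_ne_zero i), if_neg (Nat.succ_ne_zero (i+1)),
        (by omega : i+1-1 = i), (by omega : i+2-1 = i+1)]
      have hf2 : ((2*(i+2)).factorial : ℚ)
          = (2*(i:ℚ)+4)*((2*(i:ℚ)+3)*((2*(i+1)).factorial : ℚ)) := by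
        rw [(by ring : 2*(i+2) = (2*(i+1)+1)+1), Nat.factorial_succ, Nat.factorial_succ]
        push_cast; ring
      have hfi : (((i+1)).factorial : ℚ) = ((i:ℚ)+1)*(i.factorial:ℚ) := by
        rw [Nat.factorial_succ]; push_cast; ring
      have hpow : (-1:ℚ)^(i+1) = -(-1:ℚ)^i := by rw [pow_succ]; ring
      have hne1 : ((2*(i+1)).factorial : ℚ) ≠ 0 := Nat.cast_ne_zero.mpr (Nat.factorial_ne_zero _)
      have hne2 : (2*(i:ℚ)+3) ≠ 0 := by positivity
      have hne3 : (2*(i:ℚ)+4) ≠ 0 := by positivity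
      rw [hf2, hfi, hpow]
      push_cast
      field_simp
      ring
  · obtain ⟨j, rfl⟩ := ho
    have z1 : coeff (2*j+1+2) Gser = 0 := hG_odd (2*j+1+2) (by omega)
    have z3 : coeff (2*j+1-1+1) Gser = 0 := hG_odd (2*j+1-1+1) (by omega)
    rw [if_neg (by omega : ¬ 2*j+1 = 0)]
    simp only [hddG, hdG]
    rw [z1, z3]
    by_cases h2 : 2 ≤ 2*j+1
    · have z2 : coeff (2*j+1-2+2) Gser = 0 := hG_odd (2*j+1-2+2) (by omega)
      rw [if_pos (by omega : 1 ≤ 2*j+1), if_pos h2, z2]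
      ring
    · rw [if_pos (by omega : 1 ≤ 2*j+1), if_neg h2]
      ring


lemma h4C' : (4:ℚ⟦X⟧) = C 4 := (map_ofNat C 4).symm

lemma HX2 : Hseries.compose (X^2) = Sser * Sser := by
  ext n
  rw [coeff_compose_X2, Sser_sq, map_sub, map_add, coeff_Eser, coeff_Eser,
    (map_ofNat C 2).symm, coeff_C]
  rcases Nat.even_or_odd n with he | ho
  · obtain ⟨m', hm'⟩ := he
    obtain ⟨m, rfl⟩ : ∃ m, n = 2*m := ⟨m', by omega⟩
    rw [if_pos (by omega : 2*m % 2 = 0), (by omega : 2*m/2 = m), coeff_Hseries]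
    have hpow : ((-1:ℚ))^(2*m) = 1 := by rw [pow_mul]; norm_num
    rw [hpow, one_pow]
    rcases m with _ | i
    · norm_num [Nat.factorial]
    · rw [if_neg (Nat.succ_ne_zero i), if_neg (by omega : ¬ 2*(i+1) = 0), sub_zero,
        ← add_div]
      norm_num
  · obtain ⟨j, rfl⟩ := ho
    rw [if_neg (by omega : ¬ (2*j+1) % 2 = 0), if_neg (by omega : ¬ 2*j+1 = 0), sub_zero,
      one_pow]
    have hpow : ((-1:ℚ))^(2*j+1) = -1 := by rw [pow_succ, pow_mul]; norm_num
    rw [hpow]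
    ring

lemma hC_half : (C (1/2 : ℚ) : ℚ⟦X⟧) * C (1/2) = C (1/4) := by rw [← map_mul]; norm_num

lemma h41 : (4:ℚ⟦X⟧) * C (1/4) = 1 := by rw [h4C', ← map_mul]; norm_num

lemma dds_Sser : d⁄dX ℚ (d⁄dX ℚ Sser) = C (1/4) * Sser := by
  rw [derivative_Sser, Derivation.leibniz, derivative_C, derivative_Cser]
  simp only [smul_eq_mul, smul_zero, mul_zero, add_zero]
  rw [← mul_assoc, hC_half]

lemma ds_sq : d⁄dX ℚ Sser * d⁄dX ℚ Sser = C (1/4) * (Sser*Sser) + 1 := by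
  rw [derivative_Sser]
  calc C (1/2)*Cser*(C (1/2)*Cser) = (C (1/2)*C (1/2))*(Cser*Cser) := by ring
  _ = C (1/4)*(Sser*Sser+4) := by rw [hC_half, Cser_sq]
  _ = C (1/4)*(Sser*Sser) + 1 := by
      rw [mul_add, mul_comm (C (1/4)) (4:ℚ⟦X⟧), h41]

lemma key_comp : (d⁄dX ℚ (d⁄dX ℚ Gser)).compose Sser * (Sser*Sser+4)
    + (d⁄dX ℚ Gser).compose Sser * Sser = C 8 := by
  have hs0 := constantCoeff_Sser
  have h1 : ((X^2) * (d⁄dX ℚ (d⁄dX ℚ Gser)) + 4 * (d⁄dX ℚ (d⁄dX ℚ Gser))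
      + X^1 * (d⁄dX ℚ Gser)).compose Sser = C 8 := by
    rw [ODE_G, compose_C hs0]
  rw [compose_add, compose_add, compose_mul hs0, compose_mul hs0, compose_mul hs0,
      compose_pow hs0, compose_pow hs0, compose_X hs0, h4C', compose_C hs0] at h1
  rw [h4C']
  linear_combination h1

lemma W_eq : Gser.compose Sser = X^2 := by
  have hs0 := constantCoeff_Sser
  have hA : d⁄dX ℚ (Gser.compose Sser) = (d⁄dX ℚ Gser).compose Sser * d⁄dX ℚ Sser :=
    derivative_compose hs0 _
  have h4dd : (4:ℚ⟦X⟧) * (d⁄dX ℚ (d⁄dX ℚ (Gser.compose Sser))) = C 8 := by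
    rw [hA, Derivation.leibniz, smul_eq_mul, smul_eq_mul, derivative_compose hs0, dds_Sser]
    set A := (d⁄dX ℚ Gser).compose Sser
    set D := (d⁄dX ℚ (d⁄dX ℚ Gser)).compose Sser
    linear_combination (A*Sser + Sser*Sser*D) * h41 + 4*D*ds_sq + key_comp
  have h8 : C 8 = (4:ℚ⟦X⟧) * C 2 := by rw [h4C', ← map_mul]; norm_num
  have h4ne : (4:ℚ⟦X⟧) ≠ 0 := by
    rw [h4C']
    intro h
    have := congrArg constantCoeff h
    simp at this
  have hdd : d⁄dX ℚ (d⁄dX ℚ (Gser.compose Sser)) = C 2 :=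
    mul_left_cancel₀ h4ne (by rw [h4dd, h8])
  have hg0 : coeff 0 Gser = 0 := by
    show coeff 0 (Fseries.compose (X^2)) = 0
    rw [coeff_zero_eq_constantCoeff_apply, constantCoeff_compose, constantCoeff_Fseries]
  have hg1 : coeff 1 Gser = 0 := hG_odd 1 rfl
  have hcoe1 : coeff 1 (Gser.compose Sser) = 0 := by
    rw [coeff_compose' hs0 _ (by omega : 1 < 2), Finset.sum_range_succ, Finset.sum_range_one]
    rw [hg0, hg1]
    ring
  have hdW : d⁄dX ℚ (Gser.compose Sser) = C 2 * X := by
    apply derivative.ext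
    · rw [hdd, Derivation.leibniz, derivative_X, derivative_C]
      simp
    · rw [← coeff_zero_eq_constantCoeff_apply, coeff_derivative, hcoe1,
        ← coeff_zero_eq_constantCoeff_apply, coeff_C_mul, coeff_X]
      norm_num
  apply derivative.ext
  · rw [hdW]
    have hdX2 : d⁄dX ℚ ((X:ℚ⟦X⟧)^2) = C 2 * X := by
      ext n
      rw [coeff_derivative, coeff_X_pow, coeff_C_mul, coeff_X]
      rcases n with _ | _ | k
      · norm_num
      · norm_num
      · rw [if_neg (by omega : ¬ k+1+1+1 = 2), if_neg (by omega : ¬ k+1+1 = 1)]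
        norm_num
    rw [hdX2]
  · rw [constantCoeff_compose, Gser, constantCoeff_compose, constantCoeff_Fseries]
    simp

end PowerSeries

theorem Fseries_comp_inverse_Hseries :
    Fseries.compose Hseries = PowerSeries.X ∧ Hseries.compose Fseries = PowerSeries.X := by
  have hs0 := constantCoeff_Sser
  have hF0 := constantCoeff_Fseries
  have hH0 := constantCoeff_Hseries
  have hX2 : constantCoeff ((X:ℚ⟦X⟧)^2) = 0 := by simp
  have hFH : Fseries.compose Hseries = X := by
    apply compose_X_sq_injective
    rw [compose_assoc hH0 hX2, HX2, compose_X hX2]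
    have hSS : Sser * Sser = (X^2 : ℚ⟦X⟧).compose Sser := by
      rw [compose_pow hs0, compose_X hs0, pow_two]
    rw [hSS, ← compose_assoc hX2 hs0]
    exact W_eq
  have hHF : Hseries.compose Fseries = X := by
    apply compose_right_injective hH0 (by rw [coeff_one_Hseries]; norm_num)
    rw [compose_assoc hF0 hH0, hFH, compose_X_right, compose_X hH0]
  exact ⟨hFH, hHF⟩
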